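/- Let p ≥ 2 and D_p(X) = tr(X) + (p-2)λ_max(X). For symmetric positive definite matrices X₁, X₂ and ν ∈ [0,1], the two-matrix case of the harmonic mean inequality holds: 1 / D_p((νX₁ + (1-ν)X₂)⁻¹) ≥ ν / D_p(X₁⁻¹) + (1-ν) / D_p(X₂⁻¹). -/

import Mathlib

open Matrix

noncomputable def lamMax {n : ℕ} (X : Matrix (Fin n) (Fin n) ℝ) : ℝ :=
  sSup (spectrum ℝ X)

noncomputable def lamMin {n : ℕ} (X : Matrix (Fin n) (Fin n) ℝ) : ℝ :=
  sInf (spectrum ℝ X)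

noncomputable def Dp {n : ℕ} (p : ℝ) (X : Matrix (Fin n) (Fin n) ℝ) : ℝ :=
  X.trace + (p - 2) * lamMax X

section Helpers

variable {n : ℕ} {A B : Matrix (Fin n) (Fin n) ℝ}

lemma eig_le_lamMax (hA : A.IsHermitian) (i : Fin n) : hA.eigenvalues i ≤ lamMax A := by
  have hfin : (spectrum ℝ A).Finite := A.finite_real_spectrum
  exact le_csSup hfin.bddAbove (hA.eigenvalues_mem_spectrum_real i)

lemma exists_eig_lamMax (hA : A.IsHermitian) (hn : 0 < n) :
    ∃ i, hA.eigenvalues i = lamMax A := by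
  haveI : Nonempty (Fin n) := ⟨⟨0, hn⟩⟩
  have hfin : (spectrum ℝ A).Finite := A.finite_real_spectrum
  have hne : (spectrum ℝ A).Nonempty := by
    rw [hA.spectrum_real_eq_range_eigenvalues]; exact Set.range_nonempty _
  have h := hne.csSup_mem hfin
  rw [hA.spectrum_real_eq_range_eigenvalues] at h
  obtain ⟨i, hi⟩ := h
  exact ⟨i, by rw [hi, lamMax, hA.spectrum_real_eq_range_eigenvalues]⟩

lemma psd_smul_one_sub (hA : A.IsHermitian) {c : ℝ} (hc : ∀ i, hA.eigenvalues i ≤ c) :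
    (c • (1 : Matrix (Fin n) (Fin n) ℝ) - A).PosSemidef := by
  have key : c • (1 : Matrix (Fin n) (Fin n) ℝ) - A =
      (hA.eigenvectorUnitary : Matrix (Fin n) (Fin n) ℝ) *
        diagonal (fun i => c - hA.eigenvalues i) *
        (hA.eigenvectorUnitary : Matrix (Fin n) (Fin n) ℝ)ᴴ := by
    have hU : (hA.eigenvectorUnitary : Matrix (Fin n) (Fin n) ℝ) *
        (hA.eigenvectorUnitary : Matrix (Fin n) (Fin n) ℝ)ᴴ = 1 :=
      (Matrix.mem_unitaryGroup_iff).mp hA.eigenvectorUnitary.2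
    have hdiag : diagonal (fun i => c - hA.eigenvalues i) =
        c • (1 : Matrix (Fin n) (Fin n) ℝ) - diagonal (hA.eigenvalues) := by
      rw [smul_eq_diagonal_mul, mul_one, diagonal_sub]
    rw [hdiag, mul_sub, sub_mul, mul_smul_comm, smul_mul_assoc, mul_one, hU]
    congr 1
    conv_lhs => rw [hA.spectral_theorem]
    simp [Function.comp, Matrix.star_eq_conjTranspose, Matrix.conjTranspose_eq_transpose_of_trivial]
  rw [key]
  exact (Matrix.PosSemidef.diagonal (fun i => sub_nonneg.mpr (hc i))).mul_mul_conjTranspose_same _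

lemma rayleigh_le (hA : A.IsHermitian) (x : Fin n → ℝ) :
    x ⬝ᵥ A *ᵥ x ≤ lamMax A * (x ⬝ᵥ x) := by
  have h := (psd_smul_one_sub hA (fun i => eig_le_lamMax hA i)).dotProduct_mulVec_nonneg x
  rw [star_trivial, sub_mulVec, dotProduct_sub, smul_mulVec, one_mulVec,
    dotProduct_smul, smul_eq_mul] at h
  linarith

lemma exists_unit_eigvec (hA : A.IsHermitian) (hn : 0 < n) :
    ∃ v : Fin n → ℝ, v ⬝ᵥ v = 1 ∧ A *ᵥ v = lamMax A • v := by
  obtain ⟨i, hi⟩ := exists_eig_lamMax hA hn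
  refine ⟨⇑(hA.eigenvectorBasis i), ?_, by rw [hA.mulVec_eigenvectorBasis, hi]⟩
  have h1 : ‖hA.eigenvectorBasis i‖ = 1 := hA.eigenvectorBasis.orthonormal.1 i
  have h2 : (inner ℝ (hA.eigenvectorBasis i) (hA.eigenvectorBasis i) : ℝ) = 1 := by
    rw [real_inner_self_eq_norm_sq, h1]; norm_num
  rw [← h2]
  rfl

lemma herm_smul (hA : A.IsHermitian) (c : ℝ) : (c • A).IsHermitian := by
  unfold Matrix.IsHermitian at *
  rw [conjTranspose_smul, star_trivial, hA]


lemma lamMax_mono (hA : A.IsHermitian) (hB : B.IsHermitian) (hn : 0 < n)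
    (h : (B - A).PosSemidef) : lamMax A ≤ lamMax B := by
  obtain ⟨v, hv1, hv2⟩ := exists_unit_eigvec hA hn
  have h1 := h.dotProduct_mulVec_nonneg v
  rw [star_trivial, sub_mulVec, dotProduct_sub] at h1
  have h2 : v ⬝ᵥ A *ᵥ v = lamMax A := by rw [hv2, dotProduct_smul, smul_eq_mul, hv1, mul_one]
  have h3 := rayleigh_le hB v
  rw [hv1, mul_one] at h3
  linarith

lemma lamMax_combo (hA : A.IsHermitian) (hB : B.IsHermitian) (hn : 0 < n)
    {α β : ℝ} (hα : 0 ≤ α) (hβ : 0 ≤ β) :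
    lamMax (α • A + β • B) ≤ α * lamMax A + β * lamMax B := by
  have hS : (α • A + β • B).IsHermitian := (herm_smul hA α).add (herm_smul hB β)
  obtain ⟨v, hv1, hv2⟩ := exists_unit_eigvec hS hn
  have key : lamMax (α • A + β • B) = α * (v ⬝ᵥ A *ᵥ v) + β * (v ⬝ᵥ B *ᵥ v) := by
    have : v ⬝ᵥ (α • A + β • B) *ᵥ v = lamMax (α • A + β • B) := by
      rw [hv2, dotProduct_smul, smul_eq_mul, hv1, mul_one]
    rw [← this, add_mulVec, dotProduct_add, smul_mulVec, smul_mulVec,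
      dotProduct_smul, dotProduct_smul, smul_eq_mul, smul_eq_mul]
  have r1 := rayleigh_le hA v
  have r2 := rayleigh_le hB v
  rw [hv1, mul_one] at r1 r2
  rw [key]
  have := mul_le_mul_of_nonneg_left r1 hα
  have := mul_le_mul_of_nonneg_left r2 hβ
  linarith

lemma psd_smul {c : ℝ} (h : A.PosSemidef) (hc : 0 ≤ c) : (c • A).PosSemidef := by
  refine PosSemidef.of_dotProduct_mulVec_nonneg (herm_smul h.1 c) (fun x => ?_)
  rw [smul_mulVec, dotProduct_smul, smul_eq_mul]
  exact mul_nonneg hc (h.dotProduct_mulVec_nonneg x)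

lemma psd_add (hA : A.PosSemidef) (hB : B.PosSemidef) : (A + B).PosSemidef := by
  refine PosSemidef.of_dotProduct_mulVec_nonneg (hA.1.add hB.1) (fun x => ?_)
  rw [add_mulVec, dotProduct_add]
  exact add_nonneg (hA.dotProduct_mulVec_nonneg x) (hB.dotProduct_mulVec_nonneg x)

lemma posDef_add_psd (hA : A.PosDef) (hB : B.PosSemidef) : (A + B).PosDef := by
  refine PosDef.of_dotProduct_mulVec_pos (hA.1.add hB.1) (fun x hx => ?_)
  rw [add_mulVec, dotProduct_add]
  exact add_pos_of_pos_of_nonneg (hA.dotProduct_mulVec_pos hx) (hB.dotProduct_mulVec_nonneg x)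

lemma psd_trace_nonneg (h : A.PosSemidef) : 0 ≤ A.trace := by
  refine Finset.sum_nonneg fun i _ => ?_
  simpa using h.dotProduct_mulVec_nonneg (Pi.single i 1)

lemma posDef_trace_pos (h : A.PosDef) (hn : 0 < n) : 0 < A.trace := by
  have : ∀ i, 0 < A.diag i := fun i => by
    simpa using h.dotProduct_mulVec_pos (x := Pi.single i 1)
      (fun hx => one_ne_zero (α := ℝ) (by simpa using congr_fun hx i))
  exact Finset.sum_pos (fun i _ => this i) ⟨⟨0, hn⟩, Finset.mem_univ _⟩

lemma posDef_lamMax_pos (h : A.PosDef) (hn : 0 < n) : 0 < lamMax A := by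
  obtain ⟨i, hi⟩ := exists_eig_lamMax h.1 hn
  rw [← hi]; exact h.eigenvalues_pos i

lemma dp_pos {p : ℝ} (hp : 2 ≤ p) (h : A.PosDef) (hn : 0 < n) : 0 < Dp p A :=
  add_pos_of_pos_of_nonneg (posDef_trace_pos h hn)
    (mul_nonneg (by linarith) (posDef_lamMax_pos h hn).le)

lemma dp_mono {p : ℝ} (hp : 2 ≤ p) (hn : 0 < n) (hA : A.IsHermitian) (hB : B.IsHermitian)
    (h : (B - A).PosSemidef) : Dp p A ≤ Dp p B := by
  have ht : A.trace ≤ B.trace := by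
    have := psd_trace_nonneg h
    rw [trace_sub] at this; linarith
  have hl := mul_le_mul_of_nonneg_left (lamMax_mono hA hB hn h) (show (0:ℝ) ≤ p - 2 by linarith)
  unfold Dp; linarith

lemma dp_combo {p : ℝ} (hp : 2 ≤ p) (hn : 0 < n) (hA : A.IsHermitian) (hB : B.IsHermitian)
    {α β : ℝ} (hα : 0 ≤ α) (hβ : 0 ≤ β) :
    Dp p (α • A + β • B) ≤ α * Dp p A + β * Dp p B := by
  have hl := mul_le_mul_of_nonneg_left (lamMax_combo hA hB hn hα hβ)
    (show (0:ℝ) ≤ p - 2 by linarith)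
  unfold Dp
  rw [trace_add, trace_smul, trace_smul, smul_eq_mul, smul_eq_mul]
  nlinarith [hl]

lemma posdef_smul {c : ℝ} (h : A.PosDef) (hc : 0 < c) : (c • A).PosDef := by
  refine PosDef.of_dotProduct_mulVec_pos (herm_smul h.1 c) (fun x hx => ?_)
  rw [smul_mulVec, dotProduct_smul, smul_eq_mul]
  exact mul_pos hc (h.dotProduct_mulVec_pos hx)

end Helpers

theorem stmt5 {n : ℕ} (p : ℝ) (hp : 2 ≤ p)
    (X₁ X₂ : Matrix (Fin n) (Fin n) ℝ) (h1 : X₁.PosDef) (h2 : X₂.PosDef)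
    (ν : ℝ) (hν0 : 0 ≤ ν) (hν1 : ν ≤ 1) :
    ν / Dp p X₁⁻¹ + (1 - ν) / Dp p X₂⁻¹ ≤ 1 / Dp p (ν • X₁ + (1 - ν) • X₂)⁻¹ := by
  rcases Nat.eq_zero_or_pos n with hn | hn
  · subst hn
    haveI : Unique (Matrix (Fin 0) (Fin 0) ℝ) :=
      ⟨⟨0⟩, fun M => by ext i j; exact i.elim0⟩
    have hD : ∀ Y : Matrix (Fin 0) (Fin 0) ℝ, Dp p Y = 0 := by
      intro Y
      have hσ : spectrum ℝ Y = ∅ := by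
        ext k
        simp only [spectrum.mem_iff, Set.mem_empty_iff_false, iff_false, not_not]
        exact isUnit_of_subsingleton _
      rw [Dp, Matrix.trace_eq_zero_of_isEmpty, lamMax, hσ, Real.sSup_empty]
      ring
    simp [hD]
  -- main case
  set M : Matrix (Fin n) (Fin n) ℝ := ν • X₁ + (1 - ν) • X₂ with hMdef
  have hM : M.PosDef := by
    rcases eq_or_lt_of_le hν0 with h | h
    · have : M = X₂ := by rw [hMdef, ← h]; simp
      rw [this]; exact h2
    · exact posDef_add_psd (posdef_smul h1 h) (psd_smul h2.posSemidef (by linarith))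
  have hMinv : M⁻¹.PosDef := hM.inv
  have h1i : X₁⁻¹.PosDef := h1.inv
  have h2i : X₂⁻¹.PosDef := h2.inv
  -- inverse identities
  have hX1a : X₁ * X₁⁻¹ = 1 := Matrix.mul_nonsing_inv _ h1.det_pos.ne'.isUnit
  have hX1b : X₁⁻¹ * X₁ = 1 := Matrix.nonsing_inv_mul _ h1.det_pos.ne'.isUnit
  have hX2a : X₂ * X₂⁻¹ = 1 := Matrix.mul_nonsing_inv _ h2.det_pos.ne'.isUnit
  have hX2b : X₂⁻¹ * X₂ = 1 := Matrix.nonsing_inv_mul _ h2.det_pos.ne'.isUnit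
  have hMb : M⁻¹ * M = 1 := Matrix.nonsing_inv_mul _ hM.det_pos.ne'.isUnit
  -- scalars
  have ha : 0 < Dp p X₁⁻¹ := dp_pos hp h1i hn
  have hb : 0 < Dp p X₂⁻¹ := dp_pos hp h2i hn
  set a : ℝ := Dp p X₁⁻¹ with hadef
  set b : ℝ := Dp p X₂⁻¹ with hbdef
  set e : ℝ := ν / a + (1 - ν) / b with hedef
  have he : 0 < e := by
    rcases eq_or_lt_of_le hν0 with h | h
    · rw [hedef, ← h]; simp; positivity
    · have : 0 < ν / a := div_pos h ha
      have : 0 ≤ (1 - ν) / b := div_nonneg (by linarith) hb.le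
      rw [hedef]; linarith
  set c : ℝ := e⁻¹ with hcdef
  have hc : 0 < c := inv_pos.mpr he
  set s₁ : ℝ := c / a with hs1def
  set s₂ : ℝ := c / b with hs2def
  have hs1 : 0 ≤ s₁ := (div_pos hc ha).le
  have hs2 : 0 ≤ s₂ := (div_pos hc hb).le
  have hsum : ν * s₁ + (1 - ν) * s₂ = 1 := by
    have h1' : ν * (c / a) + (1 - ν) * (c / b) = c * (ν / a + (1 - ν) / b) := by ring
    rw [hs1def, hs2def, h1', ← hedef, hcdef, inv_mul_cancel₀ he.ne']
  have hcval : ν * s₁ ^ 2 * a + (1 - ν) * s₂ ^ 2 * b = c := by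
    rw [hs1def, hs2def]
    have h1' : ν * (c / a) ^ 2 * a + (1 - ν) * (c / b) ^ 2 * b
        = c * (c * (ν / a + (1 - ν) / b)) := by
      field_simp
    rw [h1', ← hedef, hcdef, inv_mul_cancel₀ he.ne', mul_one]
  -- matrix inequality
  set C₁ : Matrix (Fin n) (Fin n) ℝ := M⁻¹ - s₁ • X₁⁻¹ with hC₁
  set C₂ : Matrix (Fin n) (Fin n) ℝ := M⁻¹ - s₂ • X₂⁻¹ with hC₂
  have hC₁H : C₁ᴴ = C₁ := by
    rw [hC₁, conjTranspose_sub, conjTranspose_smul, star_trivial, hMinv.1, h1i.1]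
  have hC₂H : C₂ᴴ = C₂ := by
    rw [hC₂, conjTranspose_sub, conjTranspose_smul, star_trivial, hMinv.1, h2i.1]
  have hB1 : (C₁ * X₁ * C₁).PosSemidef := by
    have := h1.posSemidef.mul_mul_conjTranspose_same C₁
    rwa [hC₁H] at this
  have hB2 : (C₂ * X₂ * C₂).PosSemidef := by
    have := h2.posSemidef.mul_mul_conjTranspose_same C₂
    rwa [hC₂H] at this
  have hE1 : C₁ * X₁ * C₁ = M⁻¹ * X₁ * M⁻¹ - (2 * s₁) • M⁻¹ + (s₁ * s₁) • X₁⁻¹ := by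
    rw [hC₁]
    simp only [sub_mul, mul_sub, smul_mul_assoc, mul_smul_comm, smul_smul, smul_sub]
    rw [mul_assoc M⁻¹ X₁ X₁⁻¹]
    simp only [hX1a, hX1b, mul_one, one_mul]
    module
  have hE2 : C₂ * X₂ * C₂ = M⁻¹ * X₂ * M⁻¹ - (2 * s₂) • M⁻¹ + (s₂ * s₂) • X₂⁻¹ := by
    rw [hC₂]
    simp only [sub_mul, mul_sub, smul_mul_assoc, mul_smul_comm, smul_smul, smul_sub]
    rw [mul_assoc M⁻¹ X₂ X₂⁻¹]
    simp only [hX2a, hX2b, mul_one, one_mul]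
    module
  have hsplit : ν • (M⁻¹ * X₁ * M⁻¹) + (1 - ν) • (M⁻¹ * X₂ * M⁻¹) = M⁻¹ := by
    have hMM : M⁻¹ * M * M⁻¹ = M⁻¹ := by rw [hMb, one_mul]
    conv_rhs => rw [← hMM]
    conv_rhs => rw [hMdef]
    simp only [mul_add, add_mul, mul_smul_comm, smul_mul_assoc]
    rfl
  have h2s : ν * (2 * s₁) + (1 - ν) * (2 * s₂) = 2 := by linarith
  set Q : Matrix (Fin n) (Fin n) ℝ :=
    (ν * s₁ ^ 2) • X₁⁻¹ + ((1 - ν) * s₂ ^ 2) • X₂⁻¹ with hQdef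
  have key : ν • (C₁ * X₁ * C₁) + (1 - ν) • (C₂ * X₂ * C₂) = Q - M⁻¹ := by
    rw [hE1, hE2, hQdef]
    have step : ν • (M⁻¹ * X₁ * M⁻¹ - (2 * s₁) • M⁻¹ + (s₁ * s₁) • X₁⁻¹)
        + (1 - ν) • (M⁻¹ * X₂ * M⁻¹ - (2 * s₂) • M⁻¹ + (s₂ * s₂) • X₂⁻¹)
        = (ν • (M⁻¹ * X₁ * M⁻¹) + (1 - ν) • (M⁻¹ * X₂ * M⁻¹))
          - (ν * (2 * s₁) + (1 - ν) * (2 * s₂)) • M⁻¹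
          + (ν * s₁ ^ 2) • X₁⁻¹ + ((1 - ν) * s₂ ^ 2) • X₂⁻¹ := by
      module
    rw [step, hsplit, h2s]
    module
  have hQpsd : (Q - M⁻¹).PosSemidef := by
    rw [← key]
    exact psd_add (psd_smul hB1 hν0) (psd_smul hB2 (by linarith))
  have hQherm : Q.IsHermitian :=
    (herm_smul h1i.1 _).add (herm_smul h2i.1 _)
  have hd1 : Dp p M⁻¹ ≤ Dp p Q := dp_mono hp hn hMinv.1 hQherm hQpsd
  have hd2 : Dp p Q ≤ (ν * s₁ ^ 2) * a + ((1 - ν) * s₂ ^ 2) * b := by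
    have := dp_combo (A := X₁⁻¹) (B := X₂⁻¹) (α := ν * s₁ ^ 2) (β := (1 - ν) * s₂ ^ 2)
      hp hn h1i.1 h2i.1
      (mul_nonneg hν0 (sq_nonneg s₁))
      (mul_nonneg (by linarith : (0:ℝ) ≤ 1 - ν) (sq_nonneg s₂))
    exact this
  have hdc : Dp p M⁻¹ ≤ c := by
    calc Dp p M⁻¹ ≤ (ν * s₁ ^ 2) * a + ((1 - ν) * s₂ ^ 2) * b := le_trans hd1 hd2
    _ = c := by rw [← hcval]
  have hd0 : 0 < Dp p M⁻¹ := dp_pos hp hMinv hn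
  have final : e ≤ 1 / Dp p M⁻¹ := by
    have h1' : 1 / c ≤ 1 / Dp p M⁻¹ := one_div_le_one_div_of_le hd0 hdc
    have h2' : (1 : ℝ) / c = e := by rw [hcdef, one_div, inv_inv]
    linarith
  exact final
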